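/- For every m × n parallelogram polyomino, the number of unit squares strictly enclosed between the red (upper) and green (lower) boundary paths equals the sum of the values of the letters of its area word (where a barred letter x̄ and an unbarred letter x both contribute x). -/

import Mathlib

open Finset

/-! ## Lattice-path preliminaries for parallelogram polyominoes.
Paths are lists of booleans: `true` = north step, `false` = east step. -/

/-- Interlacing `D = (r₁, 1-g₁, r₂, 1-g₂, …)` of the red path and the complemented green path. -/
def interlace : List Bool → List Bool → List Bool
  | [], _ => []
  | _ :: _, [] => []
  | a :: as, b :: bs => a :: (!b) :: interlace as bs

/-- Reading levels along a 0/1 word: on a `true` record the current level and go up one level,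
on a `false` go down one level (recording nothing). -/
def levels : List Bool → ℕ → List ℕ
  | [], _ => []
  | true :: rest, l => l :: levels rest (l + 1)
  | false :: rest, l => levels rest (l - 1)

def countTrue (l : List Bool) : ℕ := (l.filter fun b => b = true).length
def countFalse (l : List Bool) : ℕ := (l.filter fun b => b = false).length

/-- The number of `true`s (north steps) occurring before the `(x+1)`-st `false` (east step):
the height of the path along the column `x ↦ x+1`. -/
def colHeight : List Bool → ℕ → ℕ
  | [], _ => 0
  | true :: rest, k => colHeight rest k + 1
  | false :: _, 0 => 0
  | false :: rest, k + 1 => colHeight rest k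

/-- The number of `false`s (east steps) occurring before the `(y+1)`-st `true` (north step). -/
def colX (p : List Bool) (y : ℕ) : ℕ := colHeight (p.map fun b => !b) y

/-- `r` and `g` are the red (upper) and green (lower) boundary paths of an `m × n`
parallelogram polyomino: both go from `(0,0)` to `(m,n)` and the red one stays strictly
above the green one except at the endpoints. -/
def IsPolyo (m n : ℕ) (r g : List Bool) : Prop :=
  r.length = m + n ∧ g.length = m + n ∧ countTrue r = n ∧ countTrue g = n ∧
    ∀ i : ℕ, 1 ≤ i → i < m + n → countTrue (g.take i) < countTrue (r.take i)

/-- Reduced parallelogram polyomino: the red path stays weakly above the green one. -/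
def IsRPolyo (m n : ℕ) (r g : List Bool) : Prop :=
  r.length = m + n ∧ g.length = m + n ∧ countTrue r = n ∧ countTrue g = n ∧
    ∀ i : ℕ, countTrue (g.take i) ≤ countTrue (r.take i)

/-- The area word of a (standard) parallelogram polyomino, as the list of letters of the
alphabet `0̄ < 1 < 1̄ < 2 < 2̄ < ⋯` encoded by their indices `0, 1, 2, 3, 4, …`.
Barred letters have even index, unbarred letters odd index. -/
def areaWord (r g : List Bool) : List ℕ := levels (interlace r g) 0

/-- The numerical value of the letter with index `j` in the alphabet `0̄ < 1 < 1̄ < 2 < ⋯`. -/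
def wval (j : ℕ) : ℕ := (j + 1) / 2

/-- The number of unit cells strictly between the two boundary paths. -/
def cellArea (m : ℕ) (r g : List Bool) : ℕ :=
  ∑ x ∈ Finset.range m, (colHeight r x - colHeight g x)

/-- `area` as the sum of the values of the letters of the area word. -/
def areaStat (r g : List Bool) : ℕ := ((areaWord r g).map wval).sum

/-- `dinv`: the number of pairs of letters of the area word such that the rightmost letter is
the successor (in the alphabet `0̄ < 1 < 1̄ < ⋯`) of the leftmost one. -/
def dinvStat (r g : List Bool) : ℕ :=
  ((Finset.range (areaWord r g).length ×ˢ Finset.range (areaWord r g).length).filter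
    fun p => p.1 < p.2 ∧ (areaWord r g).getD p.2 0 = (areaWord r g).getD p.1 0 + 1).card

/-- A rise of the area word: a barred letter immediately followed by its successor. -/
def IsRise (w : List ℕ) (i : ℕ) : Prop :=
  i + 1 < w.length ∧ w.getD i 0 % 2 = 0 ∧ w.getD (i + 1) 0 = w.getD i 0 + 1

/-- `underlined area`: the sum of the values of the letters of the area word, ignoring the
(barred) letters at the decorated positions `D`. -/
def uareaStat (r g : List Bool) (D : Finset ℕ) : ℕ :=
  ∑ i ∈ Finset.range (areaWord r g).length \ D, wval ((areaWord r g).getD i 0)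

-- auxiliary section (to be inserted above the theorem)
@[simp] lemma countTrue_nil : countTrue [] = 0 := rfl
@[simp] lemma countFalse_nil : countFalse [] = 0 := rfl
@[simp] lemma countTrue_cons_true (l : List Bool) : countTrue (true :: l) = countTrue l + 1 := by
  simp [countTrue]
@[simp] lemma countTrue_cons_false (l : List Bool) : countTrue (false :: l) = countTrue l := by
  simp [countTrue]
@[simp] lemma countFalse_cons_true (l : List Bool) : countFalse (true :: l) = countFalse l := by
  simp [countFalse]
@[simp] lemma countFalse_cons_false (l : List Bool) : countFalse (false :: l) = countFalse l + 1 := by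
  simp [countFalse]

lemma ct_add_cf (p : List Bool) : countTrue p + countFalse p = p.length := by
  induction p with
  | nil => rfl
  | cons a l ih => cases a <;> simp <;> omega

/-- Sum over the false positions of the number of preceding trues. -/
def sft : List Bool → ℕ
  | [] => 0
  | true :: as => countFalse as + sft as
  | false :: as => sft as

/-- Generalized area-word value sum, defined recursively on the two paths with gap `d`. -/
def Afun : List Bool → List Bool → ℕ → ℕ
  | [], _, _ => 0
  | _ :: _, [], _ => 0
  | true :: as, true :: bs, d => d + Afun as bs d
  | true :: as, false :: bs, d => (2*d + 1) + Afun as bs (d+1)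
  | false :: as, false :: bs, d => d + Afun as bs d
  | false :: as, true :: bs, d => Afun as bs (d - 1)

lemma sum_colHeight (p : List Bool) :
    ∑ x ∈ Finset.range (countFalse p), colHeight p x = sft p := by
  induction p with
  | nil => simp [sft]
  | cons a as ih =>
    cases a
    · have hc : ∀ x, colHeight (false :: as) (x+1) = colHeight as x := fun x => rfl
      simp only [countFalse_cons_false, sft]
      rw [Finset.sum_range_succ']
      simp only [hc, colHeight, ih]
      omega
    · have hc : ∀ x, colHeight (true :: as) x = colHeight as x + 1 := fun x => rfl
      simp only [countFalse_cons_true, sft, hc]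
      rw [Finset.sum_add_distrib, ih]
      simp [Nat.add_comm]

lemma colHeight_mono (p : List Bool) : ∀ (i x : ℕ),
    countFalse (p.take i) ≤ x → countTrue (p.take i) ≤ colHeight p x := by
  induction p with
  | nil => intro i x _; simp
  | cons a as ih =>
    intro i x h
    cases i with
    | zero => simp
    | succ j =>
      cases a
      · simp only [List.take_succ_cons, countFalse_cons_false, countTrue_cons_false] at h ⊢
        cases x with
        | zero => omega
        | succ y =>
          have := ih j y (by omega)
          simpa [colHeight] using this
      · simp only [List.take_succ_cons, countFalse_cons_true, countTrue_cons_true] at h ⊢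
        have := ih j x h
        simp only [colHeight]
        omega

lemma colHeight_witness (p : List Bool) : ∀ (x : ℕ),
    ∃ i, i ≤ p.length ∧ countFalse (p.take i) ≤ x ∧ countTrue (p.take i) = colHeight p x := by
  induction p with
  | nil => intro x; exact ⟨0, by simp [colHeight]⟩
  | cons a as ih =>
    intro x
    cases a
    · cases x with
      | zero => exact ⟨0, by simp [colHeight]⟩
      | succ y =>
        obtain ⟨i, h1, h2, h3⟩ := ih y
        exact ⟨i+1, by simpa using h1, by simpa using by omega, by simpa [colHeight] using h3⟩
    · obtain ⟨i, h1, h2, h3⟩ := ih x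
      refine ⟨i+1, by simpa using h1, by simpa using h2, ?_⟩
      simp only [List.take_succ_cons, countTrue_cons_true, colHeight]
      omega

lemma key2 : ∀ (r g : List Bool) (d : ℕ), r.length = g.length →
    countTrue g = countTrue r + d →
    (∀ i, countTrue (g.take i) ≤ d + countTrue (r.take i)) →
    sft r + d * countFalse g = Afun r g d + sft g := by
  intro r
  induction r with
  | nil =>
    intro g d hlen _ _
    have : g = [] := List.length_eq_zero_iff.mp (by simpa using hlen.symm)
    subst this
    simp [sft, Afun]
  | cons a as ih =>
    intro g d hlen hct hw
    cases g with
    | nil => simp at hlen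
    | cons b bs =>
      have hlen' : as.length = bs.length := by simpa using hlen
      have h1 := ct_add_cf as
      have h2 := ct_add_cf bs
      cases a <;> cases b
      · -- FF
        have hct' : countTrue bs = countTrue as + d := by simpa using hct
        have hcf : countFalse as = countFalse bs + d := by omega
        have hw' : ∀ i, countTrue (bs.take i) ≤ d + countTrue (as.take i) := by
          intro i
          have := hw (i+1)
          simpa using this
        have := ih bs d hlen' hct' hw'
        simp only [sft, Afun, countFalse_cons_false]
        have e1 : d * (countFalse bs + 1) = d * countFalse bs + d := by ring
        omega
      · -- FT : a = false, b = true
        have hd : 1 ≤ d := by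
          have := hw 1
          simpa using this
        have hct' : countTrue bs = countTrue as + (d-1) := by
          simp at hct; omega
        have hcf : countFalse as + 1 = countFalse bs + d := by simp at hct; omega
        have hw' : ∀ i, countTrue (bs.take i) ≤ (d-1) + countTrue (as.take i) := by
          intro i
          have := hw (i+1)
          simp at this; omega
        have := ih bs (d-1) hlen' hct' hw'
        simp only [sft, Afun, countFalse_cons_true]
        have e1 : (d-1) * countFalse bs + countFalse bs = d * countFalse bs := by
          have : d - 1 + 1 = d := by omega
          calc (d-1) * countFalse bs + countFalse bs = (d-1+1) * countFalse bs := by ring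
          _ = d * countFalse bs := by rw [this]
        omega
      · -- TF : a = true, b = false
        have hct' : countTrue bs = countTrue as + (d+1) := by simp at hct; omega
        have hcf : countFalse as = countFalse bs + d + 1 := by omega
        have hw' : ∀ i, countTrue (bs.take i) ≤ (d+1) + countTrue (as.take i) := by
          intro i
          have := hw (i+1)
          simp at this; omega
        have := ih bs (d+1) hlen' hct' hw'
        simp only [sft, Afun, countFalse_cons_false]
        have e1 : d * (countFalse bs + 1) = d * countFalse bs + d := by ring
        have e2 : (d+1) * countFalse bs = d * countFalse bs + countFalse bs := by ring
        omega
      · -- TT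
        have hct' : countTrue bs = countTrue as + d := by simp at hct; omega
        have hcf : countFalse as = countFalse bs + d := by omega
        have hw' : ∀ i, countTrue (bs.take i) ≤ d + countTrue (as.take i) := by
          intro i
          have := hw (i+1)
          simp at this; omega
        have := ih bs d hlen' hct' hw'
        simp only [sft, Afun, countFalse_cons_true]
        omega

lemma key3 : ∀ (r g : List Bool) (d : ℕ),
    (∀ i, 1 ≤ i → i < r.length → countTrue (g.take i) < d + countTrue (r.take i)) →
    countTrue g ≤ d + countTrue r →
    ((levels (interlace r g) (2*d)).map wval).sum = Afun r g d := by
  intro r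
  induction r with
  | nil => intro g d _ _; simp [interlace, levels, Afun]
  | cons a as ih =>
    intro g d hH h0
    cases g with
    | nil => simp [interlace, levels, Afun]
    | cons b bs =>
      cases a <;> cases b
      · -- FF : letters false, true
        cases as with
        | nil =>
          simp only [interlace, levels, Bool.not_false, Afun, List.map_cons, List.map_nil, List.sum_cons,
            List.sum_nil, wval]
          omega
        | cons a' as' =>
          have hd : 1 ≤ d := by
            have := hH 1 (by omega) (by simp)
            simp at this; omega
          have hH' : ∀ i, 1 ≤ i → i < (a'::as').length →
              countTrue (bs.take i) < d + countTrue ((a'::as').take i) := by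
            intro i hi1 hi2
            have := hH (i+1) (by omega) (by simpa using hi2)
            simpa using this
          have h0' : countTrue bs ≤ d + countTrue (a'::as') := by
            simpa using h0
          have := ih bs d hH' h0'
          simp only [interlace, levels, Bool.not_false, Bool.not_true] at this ⊢
          have e : 2*d - 1 + 1 = 2*d := by omega
          rw [e]
          simp only [List.map_cons, List.sum_cons, this, Afun, wval]
          omega
      · -- FT : letters false, false
        cases as with
        | nil => simp [interlace, levels, Afun]
        | cons a' as' =>
          have hd : 1 ≤ d := by
            have := hH 1 (by omega) (by simp)
            simp at this; omega
          have hH' : ∀ i, 1 ≤ i → i < (a'::as').length →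
              countTrue (bs.take i) < (d-1) + countTrue ((a'::as').take i) := by
            intro i hi1 hi2
            have := hH (i+1) (by omega) (by simpa using hi2)
            simp at this; omega
          have h0' : countTrue bs ≤ (d-1) + countTrue (a'::as') := by
            simp at h0; omega
          have := ih bs (d-1) hH' h0'
          simp only [interlace, levels, Bool.not_false, Bool.not_true] at this ⊢
          have e : 2*d - 1 - 1 = 2*(d-1) := by omega
          rw [e]
          rw [this]
          simp [Afun]
      · -- TF : letters true, true
        have hH' : ∀ i, 1 ≤ i → i < as.length →
            countTrue (bs.take i) < (d+1) + countTrue (as.take i) := by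
          intro i hi1 hi2
          have := hH (i+1) (by omega) (by simpa using hi2)
          simp at this; omega
        have h0' : countTrue bs ≤ (d+1) + countTrue as := by
          simp at h0; omega
        have := ih bs (d+1) hH' h0'
        simp only [interlace, levels, Bool.not_false, Bool.not_true] at this ⊢
        have e : 2*d + 1 + 1 = 2*(d+1) := by omega
        rw [e]
        simp only [List.map_cons, List.sum_cons, this, Afun, wval]
        omega
      · -- TT : letters true, false
        have hH' : ∀ i, 1 ≤ i → i < as.length →
            countTrue (bs.take i) < d + countTrue (as.take i) := by
          intro i hi1 hi2
          have := hH (i+1) (by omega) (by simpa using hi2)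
          simp at this; omega
        have h0' : countTrue bs ≤ d + countTrue as := by
          simp at h0; omega
        have := ih bs d hH' h0'
        simp only [interlace, levels, Bool.not_false, Bool.not_true] at this ⊢
        have e : 2*d + 1 - 1 = 2*d := by omega
        rw [e]
        simp only [List.map_cons, List.sum_cons, this, Afun, wval]
        omega


/-- For every `m × n` parallelogram polyomino, the number of unit squares strictly enclosed
between the red and the green boundary paths equals the sum of the values of the letters of
its area word. -/
theorem area_eq_areaWord_sum (m n : ℕ) (r g : List Bool) (h : IsPolyo m n r g) :
    cellArea m r g = ((areaWord r g).map wval).sum := by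
  obtain ⟨hrl, hgl, hrt, hgt, hstrict⟩ := h
  have hlen : r.length = g.length := by omega
  have hccr := ct_add_cf r
  have hccg := ct_add_cf g
  have hcfr : countFalse r = m := by omega
  have hcfg : countFalse g = m := by omega
  -- pointwise comparison of column heights
  have hpt : ∀ x, x < m → colHeight g x ≤ colHeight r x := by
    intro x hx
    obtain ⟨i, hi_le, hcf_le, hct_eq⟩ := colHeight_witness g x
    rcases Nat.eq_zero_or_pos i with h0 | h1
    · subst h0
      simp at hct_eq
      have := colHeight_mono r 0 x (by simp)
      omega
    · have hi_lt : i < m + n := by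
        rcases Nat.lt_or_ge i (m + n) with h | h
        · exact h
        · exfalso
          rw [List.take_of_length_le (by omega)] at hcf_le
          omega
      have hst := hstrict i h1 hi_lt
      have e1 := ct_add_cf (r.take i)
      have e2 := ct_add_cf (g.take i)
      rw [List.length_take] at e1 e2
      have hmin : min i (m+n) = i := by omega
      rw [hrl, hmin] at e1
      rw [hgl, hmin] at e2
      have hcfr_le : countFalse (r.take i) ≤ x := by omega
      have := colHeight_mono r i x hcfr_le
      omega
  -- sums of column heights
  have hsr : ∑ x ∈ Finset.range m, colHeight r x = sft r := by
    rw [← hcfr]; exact sum_colHeight r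
  have hsg : ∑ x ∈ Finset.range m, colHeight g x = sft g := by
    rw [← hcfg]; exact sum_colHeight g
  have hsplit : (∑ x ∈ Finset.range m, (colHeight r x - colHeight g x))
      + ∑ x ∈ Finset.range m, colHeight g x = ∑ x ∈ Finset.range m, colHeight r x := by
    rw [← Finset.sum_add_distrib]
    apply Finset.sum_congr rfl
    intro x hx
    have := hpt x (Finset.mem_range.mp hx)
    omega
  -- the two key identities
  have hweak : ∀ i, countTrue (g.take i) ≤ 0 + countTrue (r.take i) := by
    intro i
    rcases Nat.lt_or_ge i (m + n) with hi | hi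
    · rcases Nat.eq_zero_or_pos i with h0 | h1
      · subst h0; simp
      · have := hstrict i h1 hi; omega
    · rw [List.take_of_length_le (by omega), List.take_of_length_le (by omega)]
      omega
  have hA2 := key2 r g 0 hlen (by omega) hweak
  have hA3 := key3 r g 0
    (by intro i h1 h2; have := hstrict i h1 (by omega); omega)
    (by omega)
  have hW : ((areaWord r g).map wval).sum = Afun r g 0 := by
    have : (2 : ℕ) * 0 = 0 := rfl
    rw [areaWord, ← this]
    exact hA3
  rw [cellArea, hW]
  omega
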